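/- Let X be a finite connected pre-ordered set, R a 2-torsion free commutative ring with unity, and L a Lie triple derivation of I(X,R) with coefficients C^{ij}_{xy}. Then C^{ii}_{ij} + C^{jj}_{ij} = 0 for all i < j. -/

import Mathlib

open IncidenceAlgebra
open scoped Classical

variable {R X : Type*}

/-- The matrix unit `e_{x y}` of the incidence algebra (zero if `¬ x ≤ y`). -/
noncomputable def matrixUnit [CommRing R] [Preorder X] [DecidableEq X] (x y : X) :
    IncidenceAlgebra R X :=
  ⟨fun u v => if u = x ∧ v = y ∧ x ≤ y then 1 else 0, fun a b hab => by
    try dsimp only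
    split_ifs with h
    · exact absurd (by rw [h.1, h.2.1]; exact h.2.2) hab
    · rfl⟩

/-- The Lie bracket `[f,g] = fg - gf`. -/
def lieBr {A : Type*} [Ring A] (f g : A) : A := f * g - g * f

/-- `L` is a Lie triple derivation of the incidence algebra. -/
def IsLieTripleDer [CommRing R] [Preorder X] [DecidableEq X] [LocallyFiniteOrder X]
    (L : IncidenceAlgebra R X →ₗ[R] IncidenceAlgebra R X) : Prop :=
  ∀ f g h : IncidenceAlgebra R X,
    L (lieBr (lieBr f g) h) =
      lieBr (lieBr (L f) g) h + lieBr (lieBr f (L g)) h + lieBr (lieBr f g) (L h)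

/-- `X` is connected: any two points are joined by a chain of comparabilities. -/
def OrdConnected' (X : Type*) [Preorder X] : Prop :=
  ∀ x y : X, Relation.ReflTransGen (fun a b : X => a ≤ b ∨ b ≤ a) x y

/-- `R` is 2-torsion free. -/
def TwoTorsionFree (R : Type*) [CommRing R] : Prop := ∀ r : R, r + r = 0 → r = 0

lemma matrixUnit_apply [CommRing R] [Preorder X] [DecidableEq X] (x y u v : X) :
    (matrixUnit x y : IncidenceAlgebra R X) u v = if u = x ∧ v = y ∧ x ≤ y then 1 else 0 := rfl

section helpers
variable [CommRing R] [Preorder X] [DecidableEq X] [LocallyFiniteOrder X]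

lemma mu_mul_mu_eq_zero (i j : X) (hne : i ≠ j) :
    (matrixUnit i i : IncidenceAlgebra R X) * matrixUnit j j = 0 := by
  ext a b
  rw [mul_apply, IncidenceAlgebra.zero_apply]
  refine Finset.sum_eq_zero fun x _ => ?_
  rw [matrixUnit_apply, matrixUnit_apply]
  split_ifs with h1 h2 h2
  · exact absurd (h1.2.1.symm.trans h2.1) hne
  all_goals ring

lemma mul_mu_right (f : IncidenceAlgebra R X) (i j : X) (hij : i ≤ j) :
    (f * (matrixUnit j j : IncidenceAlgebra R X)) i j = f i j := by
  rw [mul_apply, Finset.sum_eq_single j]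
  · simp [matrixUnit_apply]
  · intro x _ hxj; simp [matrixUnit_apply, hxj]
  · intro h; exact absurd (Finset.mem_Icc.2 ⟨hij, le_refl j⟩) h

lemma mu_mul_left (f : IncidenceAlgebra R X) (i j : X) (hij : i ≤ j) :
    ((matrixUnit i i : IncidenceAlgebra R X) * f) i j = f i j := by
  rw [mul_apply, Finset.sum_eq_single i]
  · simp [matrixUnit_apply]
  · intro x _ hxi; simp [matrixUnit_apply, hxi]
  · intro h; exact absurd (Finset.mem_Icc.2 ⟨le_refl i, hij⟩) h

lemma mu_mul_left_ne (f : IncidenceAlgebra R X) (i j : X) (hne : i ≠ j) :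
    ((matrixUnit j j : IncidenceAlgebra R X) * f) i j = 0 := by
  rw [mul_apply]
  refine Finset.sum_eq_zero fun x _ => ?_
  rw [matrixUnit_apply]
  split_ifs with h
  · exact absurd h.1 hne
  · ring

lemma mul_mu_right_ne (f : IncidenceAlgebra R X) (i j : X) (hne : i ≠ j) :
    (f * (matrixUnit i i : IncidenceAlgebra R X)) i j = 0 := by
  rw [mul_apply]
  refine Finset.sum_eq_zero fun x _ => ?_
  rw [matrixUnit_apply]
  split_ifs with h
  · exact absurd h.2.1.symm hne
  · ring

end helpers

/-- relation (R1). `C^{ii}_{ij} + C^{jj}_{ij} = 0` for `i < j`. -/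
theorem lieTripleDer_rel_R1 [CommRing R] [Preorder X] [DecidableEq X]
    [Fintype X] [LocallyFiniteOrder X]
    (htf : TwoTorsionFree R) (hconn : OrdConnected' X)
    (L : IncidenceAlgebra R X →ₗ[R] IncidenceAlgebra R X) (hL : IsLieTripleDer L) :
    ∀ i j : X, i ≤ j → i ≠ j →
      L (matrixUnit i i) i j + L (matrixUnit j j) i j = 0 := by
  intro i j hij hne
  have h1 : (matrixUnit i i : IncidenceAlgebra R X) * matrixUnit j j = 0 :=
    mu_mul_mu_eq_zero i j hne
  have h2 : (matrixUnit j j : IncidenceAlgebra R X) * matrixUnit i i = 0 :=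
    mu_mul_mu_eq_zero j i hne.symm
  have hbr : lieBr (matrixUnit i i : IncidenceAlgebra R X) (matrixUnit j j) = 0 := by
    rw [lieBr, h1, h2, sub_zero]
  have key := hL (matrixUnit i i) (matrixUnit j j) (matrixUnit j j)
  rw [hbr] at key
  have hz : ∀ f : IncidenceAlgebra R X, lieBr (0 : IncidenceAlgebra R X) f = 0 := by
    intro f; rw [lieBr, zero_mul, mul_zero, sub_zero]
  rw [hz, hz, map_zero, add_zero] at key
  set A := L (matrixUnit i i) with hA
  set B := L (matrixUnit j j) with hB
  have hkey := congrFun (DFunLike.congr_fun key.symm i) j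
  rw [IncidenceAlgebra.add_apply] at hkey
  have e1 : (lieBr (lieBr A (matrixUnit j j)) (matrixUnit j j)) i j = A i j := by
    rw [lieBr, lieBr, IncidenceAlgebra.sub_apply, mul_mu_right _ i j hij,
      mu_mul_left_ne _ i j hne, sub_zero, IncidenceAlgebra.sub_apply,
      mul_mu_right _ i j hij, mu_mul_left_ne _ i j hne, sub_zero]
  have e2 : (lieBr (lieBr (matrixUnit i i) B) (matrixUnit j j)) i j = B i j := by
    rw [lieBr, lieBr, IncidenceAlgebra.sub_apply, mul_mu_right _ i j hij,
      mu_mul_left_ne _ i j hne, sub_zero, IncidenceAlgebra.sub_apply,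
      mu_mul_left _ i j hij, mul_mu_right_ne _ i j hne, sub_zero]
  rw [e1, e2, IncidenceAlgebra.zero_apply] at hkey
  exact hkey
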